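/- Let R be a unital associative ring, n ≥ 1, and let (P₁, P₂) be a pair of n×n permutation matrices each of which fixes the first standard basis vector. Then dom(Φ) and dom(Ψ) are stable under the action M ↦ P₁⁻¹ M P₂, and both Φ and Ψ commute with this action: Φ(P₁⁻¹ A P₂) = P₁⁻¹ Φ(A) P₂ for every A ∈ dom(Φ), and Ψ(P₁⁻¹ A P₂) = P₁⁻¹ Ψ(A) P₂ for every A ∈ dom(Ψ). -/

import Mathlib

open Matrix

section KontsevichDefs

variable {R : Type*} [Ring R]

/-- `J₂`: the transposed Hadamard inverse, `J₂(M)_{jk} = (M_{kj})⁻¹`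
(with `Ring.inverse`, which is the two-sided inverse on units and `0` elsewhere). -/
noncomputable def J2 {m : Type*} (M : Matrix m m R) : Matrix m m R :=
  Matrix.of fun j k => Ring.inverse (M k j)

variable {m : Type*} [Fintype m] [DecidableEq m]

/-- `J = J₂ ∘ J₁`, where `J₁(M) = M⁻¹` is the usual matrix inverse. -/
noncomputable def Jmap (M : Matrix m m R) : Matrix m m R := J2 (Ring.inverse M)

/-- `J⁻¹ = J₁ ∘ J₂`. -/
noncomputable def JinvMap (M : Matrix m m R) : Matrix m m R := Ring.inverse (J2 M)

/-- `dom(J)`: `M` invertible and all entries of `M⁻¹` invertible. -/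
def domJ (M : Matrix m m R) : Prop :=
  IsUnit M ∧ ∀ j k, IsUnit (Ring.inverse M j k)

/-- `dom(J⁻¹)`: all entries of `M` invertible and `J₂(M)` invertible. -/
def domJinv (M : Matrix m m R) : Prop :=
  (∀ j k, IsUnit (M j k)) ∧ IsUnit (J2 M)

/-- `dom(Jⁿ)` defined recursively: `M ∈ dom(Jⁿ⁺¹)` iff `M ∈ dom(J)` and `J(M) ∈ dom(Jⁿ)`. -/
def domJpow : ℕ → Matrix m m R → Prop
  | 0, _ => True
  | n + 1, M => domJ M ∧ domJpow n (Jmap M)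

/-- `A ∼ B`: `B = D₁⁻¹ A D₂` for diagonal matrices `D₁, D₂` with invertible diagonal entries. -/
def simRel (A B : Matrix m m R) : Prop :=
  ∃ d₁ d₂ : m → Rˣ,
    B = Matrix.diagonal (fun i => (((d₁ i)⁻¹ : Rˣ) : R)) * A *
        Matrix.diagonal (fun i => ((d₂ i : Rˣ) : R))

/-- entrywise conjugation `x⁻¹ A x` by an invertible ring element. -/
def conjEntry {m' : Type*} (x : Rˣ) (A : Matrix m' m' R) : Matrix m' m' R :=
  Matrix.of fun j k => ((x⁻¹ : Rˣ) : R) * A j k * (x : R)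

/-- `M̂ₙ(R)`: first row and first column consist entirely of `1`'s. -/
def Mhat {m' : Type*} [Zero m'] (A : Matrix m' m' R) : Prop :=
  ∀ k, A 0 k = 1 ∧ A k 0 = 1

/-- `Λ^L(A)_{jk} = a₁₁ a_{j1}⁻¹ a_{jk} a_{1k}⁻¹`. -/
noncomputable def LamL {m' : Type*} [Zero m'] (A : Matrix m' m' R) : Matrix m' m' R :=
  Matrix.of fun j k => A 0 0 * Ring.inverse (A j 0) * A j k * Ring.inverse (A 0 k)

/-- `Λ^R(A)_{jk} = a_{j1}⁻¹ a_{jk} a_{1k}⁻¹ a₁₁`. -/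
noncomputable def LamR {m' : Type*} [Zero m'] (A : Matrix m' m' R) : Matrix m' m' R :=
  Matrix.of fun j k => Ring.inverse (A j 0) * A j k * Ring.inverse (A 0 k) * A 0 0

/-- `Φ(A) = J₂(Λ^L(A⁻¹))`. -/
noncomputable def Phi [Zero m] (A : Matrix m m R) : Matrix m m R := J2 (LamL (Ring.inverse A))

/-- `dom(Φ)`: `A ∈ M̂ₙ(R)`, all entries of `A` invertible, `A` invertible,
all entries of `A⁻¹` invertible. -/
def domPhi [Zero m] (A : Matrix m m R) : Prop :=
  Mhat A ∧ (∀ j k, IsUnit (A j k)) ∧ IsUnit A ∧ ∀ j k, IsUnit (Ring.inverse A j k)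

/-- `Φ⁻¹(B) = Λ^R(J⁻¹(B)) = Λ^R((J₂ B)⁻¹)`. -/
noncomputable def PhiInv [Zero m] (B : Matrix m m R) : Matrix m m R := LamR (Ring.inverse (J2 B))

/-- `dom(Φ⁻¹)`: `B ∈ M̂ₙ(R)`, all entries of `B` invertible, `J₂(B)` invertible,
all entries of `J₂(B)⁻¹` invertible. -/
def domPhiInv [Zero m] (B : Matrix m m R) : Prop :=
  Mhat B ∧ (∀ j k, IsUnit (B j k)) ∧ IsUnit (J2 B) ∧ ∀ j k, IsUnit (Ring.inverse (J2 B) j k)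

/-- `dom(Φⁿ)` defined recursively. -/
def domPhipow [Zero m] : ℕ → Matrix m m R → Prop
  | 0, _ => True
  | n + 1, A => domPhi A ∧ domPhipow n (Phi A)

/-- `Ψ = J₂ ∘ Φ ∘ J₂`. -/
noncomputable def Psi [Zero m] (A : Matrix m m R) : Matrix m m R := J2 (Phi (J2 A))

/-- `dom(Ψ)`: `A ∈ M̂ₙ(R)`, all entries of `A` invertible, `J₂(A) ∈ dom(Φ)`. -/
def domPsi [Zero m] (A : Matrix m m R) : Prop :=
  Mhat A ∧ (∀ j k, IsUnit (A j k)) ∧ domPhi (J2 A)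

/-- every square submatrix (equinumerous injective choices of rows and columns) is invertible. -/
def allSquareSubInv (M : Matrix (Fin 3) (Fin 3) R) : Prop :=
  ∀ (k : ℕ) (r c : Fin k → Fin 3), Function.Injective r → Function.Injective c →
    IsUnit (M.submatrix r c)

/-- only the `1×1` and `2×2` submatrices are required to be invertible. -/
def sub12Inv (M : Matrix (Fin 3) (Fin 3) R) : Prop :=
  (∀ j k, IsUnit (M j k)) ∧
  ∀ (r c : Fin 2 → Fin 3), Function.Injective r → Function.Injective c →
    IsUnit (M.submatrix r c)

/-- `S`: all square submatrices of `M` are invertible and `J₂(M)` is invertible. -/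
def Sset (R : Type*) [Ring R] : Set (Matrix (Fin 3) (Fin 3) R) :=
  {M | allSquareSubInv M ∧ IsUnit (J2 M)}

/-- `Ŝ = S ∩ M̂₃(R)`. -/
def Shat (R : Type*) [Ring R] : Set (Matrix (Fin 3) (Fin 3) R) :=
  {M | M ∈ Sset R ∧ Mhat M}

end KontsevichDefs


section Aux

open Matrix

variable {R : Type*} [Ring R] {m : Type*} [Fintype m] [DecidableEq m]

lemma permMatrix_mul_permMatrix (σ τ : Equiv.Perm m) :
    (σ.permMatrix R) * (τ.permMatrix R) = ((τ * σ).permMatrix R) := by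
  have : ((τ * σ : Equiv.Perm m) : m ≃ m) = Equiv.trans σ τ := rfl
  simp only [Equiv.Perm.permMatrix, this, Equiv.toPEquiv_trans, PEquiv.toMatrix_trans]

lemma permMatrix_one : ((1 : Equiv.Perm m).permMatrix R) = (1 : Matrix m m R) := by
  have : ((1 : Equiv.Perm m) : m ≃ m) = Equiv.refl m := rfl
  simp [Equiv.Perm.permMatrix, this, Equiv.toPEquiv_refl]

/-- the unit built from a permutation matrix. -/
noncomputable def permUnit (σ : Equiv.Perm m) : (Matrix m m R)ˣ where
  val := σ.permMatrix R
  inv := (σ⁻¹).permMatrix R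
  val_inv := by rw [permMatrix_mul_permMatrix]; simp [_root_.permMatrix_one]
  inv_val := by rw [permMatrix_mul_permMatrix]; simp [_root_.permMatrix_one]

lemma ringInverse_permMatrix (σ : Equiv.Perm m) :
    Ring.inverse (σ.permMatrix R) = ((σ⁻¹).permMatrix R) :=
  Ring.inverse_unit (permUnit (R := R) σ)

lemma conj_eq_submatrix (σ τ : Equiv.Perm m) (A : Matrix m m R) :
    Ring.inverse (σ.permMatrix R) * A * τ.permMatrix R = A.submatrix (⇑σ⁻¹) (⇑τ⁻¹) := by
  rw [ringInverse_permMatrix]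
  show ((σ⁻¹ : Equiv.Perm m).toPEquiv.toMatrix) * A * (τ.toPEquiv.toMatrix) = _
  rw [PEquiv.toMatrix_toPEquiv_mul, PEquiv.mul_toMatrix_toPEquiv,
    Matrix.submatrix_submatrix, ← Equiv.Perm.inv_def]
  simp [Function.comp_def]

lemma permIsUnit_submatrix {A : Matrix m m R} (e f : Equiv.Perm m) (hA : IsUnit A) :
    IsUnit (A.submatrix (⇑e) (⇑f)) := by
  rcases hA with ⟨u, rfl⟩
  have h1 : ((Units.val u).submatrix (⇑e) (⇑f)) *
      ((Units.val u⁻¹).submatrix (⇑f) (⇑e)) = 1 := by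
    rw [Matrix.submatrix_mul_equiv, Units.mul_inv, Matrix.submatrix_one_equiv]
  have h2 : ((Units.val u⁻¹).submatrix (⇑f) (⇑e)) *
      ((Units.val u).submatrix (⇑e) (⇑f)) = 1 := by
    rw [Matrix.submatrix_mul_equiv, Units.inv_mul, Matrix.submatrix_one_equiv]
  exact ⟨⟨_, _, h1, h2⟩, rfl⟩

lemma permIsUnit_submatrix_iff {A : Matrix m m R} (e f : Equiv.Perm m) :
    IsUnit (A.submatrix (⇑e) (⇑f)) ↔ IsUnit A := by
  constructor
  · intro h
    have h1 := permIsUnit_submatrix (A := A.submatrix (⇑e) (⇑f)) e⁻¹ f⁻¹ h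
    rw [Matrix.submatrix_submatrix] at h1
    have h2 : A.submatrix (⇑e ∘ ⇑e⁻¹) (⇑f ∘ ⇑f⁻¹) = A := by
      ext i j; simp
    rwa [h2] at h1
  · exact permIsUnit_submatrix e f

lemma ringInverse_submatrix (A : Matrix m m R) (e f : Equiv.Perm m) :
    Ring.inverse (A.submatrix (⇑e) (⇑f)) = (Ring.inverse A).submatrix (⇑f) (⇑e) := by
  by_cases hA : IsUnit A
  · rcases hA with ⟨u, rfl⟩
    have hu : IsUnit ((Units.val u).submatrix (⇑e) (⇑f)) :=
      permIsUnit_submatrix e f u.isUnit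
    rcases hu with ⟨v, hv⟩
    rw [← hv, Ring.inverse_unit, Ring.inverse_unit]
    have h1 : (Units.val v) * (Units.val u⁻¹).submatrix (⇑f) (⇑e) = 1 := by
      rw [hv, Matrix.submatrix_mul_equiv, Units.mul_inv, Matrix.submatrix_one_equiv]
    calc Units.val v⁻¹
        = (Units.val v⁻¹) * ((Units.val v) *
          (Units.val u⁻¹).submatrix (⇑f) (⇑e)) := by rw [h1, mul_one]
      _ = _ := by rw [← mul_assoc, Units.inv_mul, one_mul]
  · have hA' : ¬ IsUnit (A.submatrix (⇑e) (⇑f)) := by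
      rw [permIsUnit_submatrix_iff]; exact hA
    rw [Ring.inverse_non_unit _ hA, Ring.inverse_non_unit _ hA']
    ext i j; simp

omit [Fintype m] [DecidableEq m] in
lemma J2_submatrix (A : Matrix m m R) (e f : m → m) :
    J2 (A.submatrix e f) = (J2 A).submatrix f e := by
  ext i j; simp [J2, Matrix.submatrix_apply]

variable [Zero m]

omit [Fintype m] [DecidableEq m] in
lemma Mhat_submatrix {A : Matrix m m R} {e f : m → m} (he : e 0 = 0) (hf : f 0 = 0)
    (hA : Mhat A) : Mhat (A.submatrix e f) := by
  intro k
  constructor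
  · show A (e 0) (f k) = 1
    rw [he]; exact (hA (f k)).1
  · show A (e k) (f 0) = 1
    rw [hf]; exact (hA (e k)).2

omit [Fintype m] [DecidableEq m] in
lemma LamL_submatrix {A : Matrix m m R} {e f : m → m} (he : e 0 = 0) (hf : f 0 = 0) :
    LamL (A.submatrix e f) = (LamL A).submatrix e f := by
  ext i j
  simp [LamL, Matrix.submatrix_apply, he, hf]

lemma Phi_submatrix (A : Matrix m m R) (e f : Equiv.Perm m) (he : e 0 = 0) (hf : f 0 = 0) :
    Phi (A.submatrix (⇑e) (⇑f)) = (Phi A).submatrix (⇑e) (⇑f) := by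
  unfold Phi
  rw [ringInverse_submatrix, LamL_submatrix hf he, J2_submatrix]

lemma domPhi_submatrix {A : Matrix m m R} (e f : Equiv.Perm m) (he : e 0 = 0) (hf : f 0 = 0)
    (hA : domPhi A) : domPhi (A.submatrix (⇑e) (⇑f)) := by
  obtain ⟨h1, h2, h3, h4⟩ := hA
  refine ⟨Mhat_submatrix he hf h1, fun j k => h2 _ _, permIsUnit_submatrix e f h3, ?_⟩
  intro j k
  rw [ringInverse_submatrix]
  exact h4 _ _

lemma domPsi_submatrix {A : Matrix m m R} (e f : Equiv.Perm m) (he : e 0 = 0) (hf : f 0 = 0)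
    (hA : domPsi A) : domPsi (A.submatrix (⇑e) (⇑f)) := by
  obtain ⟨h1, h2, h3⟩ := hA
  refine ⟨Mhat_submatrix he hf h1, fun j k => h2 _ _, ?_⟩
  rw [J2_submatrix]
  exact domPhi_submatrix f e hf he h3

lemma Psi_submatrix (A : Matrix m m R) (e f : Equiv.Perm m) (he : e 0 = 0) (hf : f 0 = 0) :
    Psi (A.submatrix (⇑e) (⇑f)) = (Psi A).submatrix (⇑e) (⇑f) := by
  unfold Psi
  rw [J2_submatrix, Phi_submatrix _ f e hf he, J2_submatrix]

end Aux

/-- Symmetry lemma. Let `P₁ = permMatrix σ`, `P₂ = permMatrix τ` be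
permutation matrices fixing the first standard basis vector (`σ 0 = 0`, `τ 0 = 0`).
Then `dom(Φ)` and `dom(Ψ)` are stable under `M ↦ P₁⁻¹ M P₂`, and `Φ`, `Ψ` commute with
this action. -/
theorem symmetry_lemma {R : Type*} [Ring R] (n : ℕ)
    (σ τ : Equiv.Perm (Fin (n + 1))) (hσ : σ 0 = 0) (hτ : τ 0 = 0) :
    (∀ A : Matrix (Fin (n + 1)) (Fin (n + 1)) R, domPhi A →
      domPhi (Ring.inverse (σ.permMatrix R) * A * τ.permMatrix R)) ∧
    (∀ A : Matrix (Fin (n + 1)) (Fin (n + 1)) R, domPsi A →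
      domPsi (Ring.inverse (σ.permMatrix R) * A * τ.permMatrix R)) ∧
    (∀ A : Matrix (Fin (n + 1)) (Fin (n + 1)) R, domPhi A →
      Phi (Ring.inverse (σ.permMatrix R) * A * τ.permMatrix R) =
        Ring.inverse (σ.permMatrix R) * Phi A * τ.permMatrix R) ∧
    (∀ A : Matrix (Fin (n + 1)) (Fin (n + 1)) R, domPsi A →
      Psi (Ring.inverse (σ.permMatrix R) * A * τ.permMatrix R) =
        Ring.inverse (σ.permMatrix R) * Psi A * τ.permMatrix R) := by
  have hσ' : (σ⁻¹ : Equiv.Perm (Fin (n+1))) 0 = 0 := by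
    exact Equiv.Perm.inv_eq_iff_eq.2 hσ.symm
  have hτ' : (τ⁻¹ : Equiv.Perm (Fin (n+1))) 0 = 0 := by
    exact Equiv.Perm.inv_eq_iff_eq.2 hτ.symm
  refine ⟨fun A hA => ?_, fun A hA => ?_, fun A hA => ?_, fun A hA => ?_⟩
  · rw [conj_eq_submatrix]
    exact domPhi_submatrix σ⁻¹ τ⁻¹ hσ' hτ' hA
  · rw [conj_eq_submatrix]
    exact domPsi_submatrix σ⁻¹ τ⁻¹ hσ' hτ' hA
  · rw [conj_eq_submatrix, conj_eq_submatrix]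
    exact Phi_submatrix A σ⁻¹ τ⁻¹ hσ' hτ'
  · rw [conj_eq_submatrix, conj_eq_submatrix]
    exact Psi_submatrix A σ⁻¹ τ⁻¹ hσ' hτ'
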